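/- arXiv:2412.07330 — 9 statements merged into one kernel-verified Lean document; each statement's English description precedes it below -/
import Mathlib

section
/- Let g₂, g₃, x, y, z, x', y', z' ∈ ℂ satisfy x'² = 4x³ − g₂x − g₃, y'² = 4y³ − g₂y − g₃, z'² = 4z³ − g₂z − g₃, with x, y, z pairwise distinct, and set A = (x'−y')/(x−y), B = (xy'−yx')/(x−y); assume z' = Az + B. Then as polynomials in ξ one has 4ξ³ − g₂ξ − g₃ − (Aξ+B)² = 4(ξ−x)(ξ−y)(ξ−z), and in particular the Vieta relations hold: x+y+z = A²/4, xy+yz+zx + g₂/4 = −AB/2, and xyz − g₃/4 = B²/4. -/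
/-- Under the Burnside collinearity condition, the cubic
`4ξ³ − g₂ξ − g₃ − (Aξ+B)²` factors as `4(ξ−x)(ξ−y)(ξ−z)`, and the Vieta
relations hold. -/
theorem burnside_vieta (g₂ g₃ x y z x' y' z' : ℂ)
    (hx : x'^2 = 4*x^3 - g₂*x - g₃)
    (hy : y'^2 = 4*y^3 - g₂*y - g₃)
    (hz : z'^2 = 4*z^3 - g₂*z - g₃)
    (hxy : x ≠ y) (hyz : y ≠ z) (hxz : x ≠ z)
    (A B : ℂ)
    (hA : A = (x' - y')/(x - y))
    (hB : B = (x*y' - y*x')/(x - y))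
    (hlin : z' = A*z + B) :
    (∀ ξ : ℂ, 4*ξ^3 - g₂*ξ - g₃ - (A*ξ + B)^2 = 4*(ξ - x)*(ξ - y)*(ξ - z)) ∧
    x + y + z = A^2/4 ∧
    x*y + y*z + z*x + g₂/4 = -(A*B)/2 ∧
    x*y*z - g₃/4 = B^2/4 := by
  have hxy' : x - y ≠ 0 := sub_ne_zero.mpr hxy
  have hyz' : y - z ≠ 0 := sub_ne_zero.mpr hyz
  have hxz' : x - z ≠ 0 := sub_ne_zero.mpr hxz
  have hAx : x' = A*x + B := by
    rw [hA, hB, div_mul_eq_mul_div, ← add_div, eq_div_iff hxy']; ring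
  have hAy : y' = A*y + B := by
    rw [hA, hB, div_mul_eq_mul_div, ← add_div, eq_div_iff hxy']; ring
  have EX : (A*x + B)^2 = 4*x^3 - g₂*x - g₃ := by rw [← hAx]; exact hx
  have EY : (A*y + B)^2 = 4*y^3 - g₂*y - g₃ := by rw [← hAy]; exact hy
  have EZ : (A*z + B)^2 = 4*z^3 - g₂*z - g₃ := by rw [← hlin]; exact hz
  have h1 : x + y + z = A^2/4 := by
    have key : (x + y + z - A^2/4) * ((x-y)*(y-z)*(x-z)) = 0 := by
      linear_combination (-(y-z)/4) * EX + ((x-z)/4) * EY - ((x-y)/4) * EZ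
    rcases mul_eq_zero.mp key with h | h
    · linear_combination h
    · exact absurd h (by simp [hxy', hyz', hxz', mul_eq_zero])
  have h2 : x*y + y*z + z*x + g₂/4 = -(A*B)/2 := by
    have key : (x*y + y*z + z*x + g₂/4 + (A*B)/2) * ((x-y)*(y-z)*(x-z)) = 0 := by
      linear_combination (-(y-z)*(y+z)/4) * EX + ((x-z)*(x+z)/4) * EY - ((x-y)*(x+y)/4) * EZ
    rcases mul_eq_zero.mp key with h | h
    · linear_combination h
    · exact absurd h (by simp [hxy', hyz', hxz', mul_eq_zero])
  have h3 : x*y*z - g₃/4 = B^2/4 := by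
    have key : (x*y*z - g₃/4 - B^2/4) * ((x-y)*(y-z)*(x-z)) = 0 := by
      linear_combination (-(y-z)*y*z/4) * EX + ((x-z)*x*z/4) * EY - ((x-y)*x*y/4) * EZ
    rcases mul_eq_zero.mp key with h | h
    · linear_combination h
    · exact absurd h (by simp [hxy', hyz', hxz', mul_eq_zero])
  refine ⟨fun ξ => ?_, h1, h2, h3⟩
  linear_combination (4*ξ^2) * h1 + (-4*ξ) * h2 + 4 * h3
end

section
/- Let g₂, g₃, x, y, z, x', y', z' ∈ ℂ satisfy x'² = 4x³ − g₂x − g₃, y'² = 4y³ − g₂y − g₃, z'² = 4z³ − g₂z − g₃, with x, y, z pairwise distinct, and set A = (x'−y')/(x−y), B = (xy'−yx')/(x−y); assume z' = Az + B. Then (xy + yz + zx + g₂/4)² = 4(x + y + z)(xyz − g₃/4). In other words, (x,y,z) lies on the zero locus of the Kontsevich polynomial D_{0,−g₂/4,−g₃/4}. -/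
/-- Under the Burnside collinearity condition, `(x,y,z)` lies on
the zero locus of the Kontsevich polynomial `D_{0,−g₂/4,−g₃/4}`:
`(xy + yz + zx + g₂/4)² = 4(x + y + z)(xyz − g₃/4)`. -/
theorem burnside_kontsevich_locus (g₂ g₃ x y z x' y' z' : ℂ)
    (hx : x'^2 = 4*x^3 - g₂*x - g₃)
    (hy : y'^2 = 4*y^3 - g₂*y - g₃)
    (hz : z'^2 = 4*z^3 - g₂*z - g₃)
    (hxy : x ≠ y) (hyz : y ≠ z) (hxz : x ≠ z)
    (A B : ℂ)
    (hA : A = (x' - y')/(x - y))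
    (hB : B = (x*y' - y*x')/(x - y))
    (hlin : z' = A*z + B) :
    (x*y + y*z + z*x + g₂/4)^2 = 4*(x + y + z)*(x*y*z - g₃/4) := by
  have hxy0 : x - y ≠ 0 := sub_ne_zero.mpr hxy
  have hyz0 : y - z ≠ 0 := sub_ne_zero.mpr hyz
  have hxz0 : x - z ≠ 0 := sub_ne_zero.mpr hxz
  have hAx : A*x + B = x' := by
    rw [hA, hB, div_mul_eq_mul_div, ← add_div, div_eq_iff hxy0]
    ring
  have hAy : A*y + B = y' := by
    rw [hA, hB, div_mul_eq_mul_div, ← add_div, div_eq_iff hxy0]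
    ring
  have Px : (A*x + B)^2 = 4*x^3 - g₂*x - g₃ := by rw [hAx]; exact hx
  have Py : (A*y + B)^2 = 4*y^3 - g₂*y - g₃ := by rw [hAy]; exact hy
  have Pz : (A*z + B)^2 = 4*z^3 - g₂*z - g₃ := by rw [← hlin]; exact hz
  have q1 : A^2*(x+y) + 2*A*B = 4*(x^2+x*y+y^2) - g₂ :=
    mul_left_cancel₀ hxy0 (by linear_combination Px - Py)
  have q2 : A^2*(y+z) + 2*A*B = 4*(y^2+y*z+z^2) - g₂ :=
    mul_left_cancel₀ hyz0 (by linear_combination Py - Pz)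
  have hA2 : A^2 = 4*(x+y+z) :=
    mul_left_cancel₀ hxz0 (by linear_combination q1 - q2)
  have hAB : 2*A*B = -4*(x*y+y*z+z*x) - g₂ := by
    linear_combination q1 - (x+y)*hA2
  have hB2 : B^2 = 4*(x*y*z) - g₃ := by
    linear_combination Px - x^2*hA2 - x*hAB
  have hABsq : (2*A*B)^2 = (-4*(x*y+y*z+z*x) - g₂)^2 := by rw [hAB]
  linear_combination (-(1:ℂ)/16)*hABsq + (B^2/4)*hA2 + (x+y+z)*hB2
end

section
/- For all a, b, c ∈ ℂ, set f(t) = t³ + at² + bt + c. Viewing the generalized Kontsevich polynomial D_{a,b,c}(x,y,z) as a quadratic in z with coefficients A(x,y) = (x−y)², B(x,y) = −2(2a·xy + (x+y)(xy+b) + 2c), C(x,y) = (xy−b)² − 4c(x+y+a), its discriminant in z splits: B(x,y)² − 4A(x,y)C(x,y) = 16·f(x)·f(y) for all x,y ∈ ℂ. By the symmetry of D_{a,b,c}, the analogous statements hold for the discriminants in x and in y: disc_x D_{a,b,c}(·,y,z) = 16·f(y)·f(z) and disc_y D_{a,b,c}(x,·,z) = 16·f(z)·f(x). -/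
/-- The generalized Kontsevich polynomial is strongly
discriminantly separated: its discriminant in each variable splits as
`16·f(·)·f(·)` with `f(t) = t³ + at² + bt + c`. -/
theorem kontsevich_discriminant_splits (a b c : ℂ) :
    (∀ x y : ℂ,
      (-2*(2*a*x*y + (x + y)*(x*y + b) + 2*c))^2
        - 4*(x - y)^2*((x*y - b)^2 - 4*c*(x + y + a)) =
        16*(x^3 + a*x^2 + b*x + c)*(y^3 + a*y^2 + b*y + c)) ∧
    (∀ y z : ℂ,
      (-2*(2*a*y*z + (y + z)*(y*z + b) + 2*c))^2
        - 4*(y - z)^2*((y*z - b)^2 - 4*c*(y + z + a)) =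
        16*(y^3 + a*y^2 + b*y + c)*(z^3 + a*z^2 + b*z + c)) ∧
    (∀ z x : ℂ,
      (-2*(2*a*z*x + (z + x)*(z*x + b) + 2*c))^2
        - 4*(z - x)^2*((z*x - b)^2 - 4*c*(z + x + a)) =
        16*(z^3 + a*z^2 + b*z + c)*(x^3 + a*x^2 + b*x + c)) := by
  exact ⟨fun x y => by ring, fun y z => by ring, fun z x => by ring⟩
end

section
/- Let S(x,y,z) be a polynomial over ℂ, symmetric in x, y, z and of degree at most 2 in each variable, written as S = A(x,y)z² + B(x,y)z + C(x,y). Suppose (i) there exists a one-variable polynomial f over ℂ such that B(x,y)² − 4A(x,y)C(x,y) = 16·f(x)·f(y) for all x, y ∈ ℂ (the discriminant of S in z splits), and (ii) S(x,0,z) = (x−z)² for all x, z ∈ ℂ (the formal 2-group identity property). Then there exist a₁, a₂, a₃ ∈ ℂ such that S(x,y,z) = (x+y+z − a₂xyz)² − 4(1 + a₃xyz)(xy+yz+zx + a₁xyz) for all x,y,z ∈ ℂ, i.e. S is a Buchstaber polynomial. -/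
open MvPolynomial

/-- A symmetric polynomial in three variables, of degree at most 2
in each variable, whose discriminant in the third variable splits as
`16·f(x)·f(y)` and which satisfies the formal 2-group identity property
`S(x,0,z) = (x−z)²`, is a Buchstaber polynomial. -/
theorem split_discriminant_is_buchstaber
    (S : MvPolynomial (Fin 3) ℂ)
    (hsym : S.IsSymmetric)
    (hdeg : ∀ i : Fin 3, S.degreeOf i ≤ 2)
    (A B C : ℂ → ℂ → ℂ)
    (hABC : ∀ x y z : ℂ,
      MvPolynomial.eval ![x, y, z] S = A x y * z^2 + B x y * z + C x y)
    (f : Polynomial ℂ)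
    (hdisc : ∀ x y : ℂ,
      (B x y)^2 - 4 * A x y * C x y = 16 * f.eval x * f.eval y)
    (hid : ∀ x z : ℂ, MvPolynomial.eval ![x, 0, z] S = (x - z)^2) :
    ∃ a₁ a₂ a₃ : ℂ, ∀ x y z : ℂ,
      MvPolynomial.eval ![x, y, z] S =
        (x + y + z - a₂*x*y*z)^2
          - 4*(1 + a₃*x*y*z)*(x*y + y*z + z*x + a₁*x*y*z) := by
  obtain ⟨F, hF⟩ : ∃ F : ℂ → ℂ → ℂ → ℂ,
      ∀ a b c : ℂ, F a b c = MvPolynomial.eval ![a, b, c] S :=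
    ⟨fun a b c => MvPolynomial.eval ![a, b, c] S, fun _ _ _ => rfl⟩
  -- symmetry of the evaluation function
  have hs12 : ∀ a b c : ℂ, F a b c = F b a c := by
    intro a b c
    rw [hF, hF]
    conv_lhs => rw [← hsym (Equiv.swap 0 1)]
    rw [eval_rename]
    have h : (![a, b, c] ∘ ⇑(Equiv.swap (0 : Fin 3) 1)) = ![b, a, c] := by
      funext i; fin_cases i <;> simp [Equiv.swap_apply_def]
    rw [h]
  have hs13 : ∀ a b c : ℂ, F a b c = F c b a := by
    intro a b c
    rw [hF, hF]
    conv_lhs => rw [← hsym (Equiv.swap 0 2)]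
    rw [eval_rename]
    have h : (![a, b, c] ∘ ⇑(Equiv.swap (0 : Fin 3) 2)) = ![c, b, a] := by
      funext i; fin_cases i <;> simp [Equiv.swap_apply_def]
    rw [h]
  have hs23 : ∀ a b c : ℂ, F a b c = F a c b := by
    intro a b c
    rw [hF, hF]
    conv_lhs => rw [← hsym (Equiv.swap 1 2)]
    rw [eval_rename]
    have h : (![a, b, c] ∘ ⇑(Equiv.swap (1 : Fin 3) 2)) = ![a, c, b] := by
      funext i; fin_cases i <;> simp [Equiv.swap_apply_def]
    rw [h]
  have hQ : ∀ a b c : ℂ, F a b c = A a b * c^2 + B a b * c + C a b :=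
    fun a b c => (hF a b c).trans (hABC a b c)
  have hI : ∀ a c : ℂ, F a 0 c = (a - c)^2 :=
    fun a c => (hF a 0 c).trans (hid a c)
  have hz1 : ∀ a b : ℂ, F a b 0 = (a - b)^2 :=
    fun a b => (hs23 a b 0).trans (hI a b)
  have h0bc : ∀ a b : ℂ, F 0 a b = (a - b)^2 :=
    fun a b => (hs12 0 a b).trans (hI a b)
  -- quadratic interpolation in the last variable
  have hpoly : ∀ a b w : ℂ, F a b w =
      ((F a b 1 + F a b (-1) - 2 * F a b 0) / 2) * w^2
        + ((F a b 1 - F a b (-1)) / 2) * w + F a b 0 := by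
    intro a b w
    linear_combination hQ a b w - ((w^2 + w) / 2) * hQ a b 1
      - ((w^2 - w) / 2) * hQ a b (-1) - (1 - w^2) * hQ a b 0
  -- name the four free values and the derived coefficients
  obtain ⟨p, q, r, s, hp, hq, hr, hs⟩ :
      ∃ p q r s : ℂ,
        p = (F 1 1 1 - F (-1) (-1) (-1) - 3 * F 1 1 (-1) + 3 * F 1 (-1) (-1)) / 8 ∧
        q = (F 1 1 1 + F (-1) (-1) (-1) - F 1 1 (-1) - F 1 (-1) (-1) + 16) / 8 ∧
        r = (F 1 1 1 - F (-1) (-1) (-1) + F 1 1 (-1) - F 1 (-1) (-1)) / 8 ∧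
        s = (F 1 1 1 + F (-1) (-1) (-1) + 3 * F 1 1 (-1) + 3 * F 1 (-1) (-1) - 24) / 8 :=
    ⟨_, _, _, _, rfl, rfl, rfl, rfl⟩
  -- the master formula for F
  have key : ∀ x y z : ℂ, F x y z =
      x^2 + y^2 + z^2 - 2*(x*y + y*z + z*x) + p*(x*y*z)
        + q*(x*y*z)*(x + y + z) + r*(x*y*z)*(x*y + y*z + z*x) + s*(x*y*z)^2 := by
    intro x y z
    rw [hs13 x y z, hpoly z y x,
        hs23 z y 1, hs23 z y (-1),
        hpoly z 1 y, hpoly z (-1) y,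
        hz1 z y, hz1 z 1, hz1 z (-1),
        hs13 z 1 1, hs13 z 1 (-1), hs13 z (-1) 1, hs13 z (-1) (-1),
        hpoly 1 1 z, hpoly (-1) 1 z, hpoly 1 (-1) z, hpoly (-1) (-1) z,
        hz1 1 1, hz1 1 (-1), hz1 (-1) 1, hz1 (-1) (-1),
        hs13 (-1) 1 1, hs12 (-1) 1 (-1), hs23 1 (-1) 1, hs13 (-1) (-1) 1,
        hp, hq, hr, hs]
    ring
  -- explicit forms of A, B, C
  have hCf : ∀ x y : ℂ, C x y = (x - y)^2 := by
    intro x y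
    linear_combination key x y 0 - hQ x y 0
  have hAf : ∀ x y : ℂ, A x y = 1 + q*(x*y) + r*(x*y)*(x + y) + s*(x*y)^2 := by
    intro x y
    linear_combination (1/2 : ℂ) * key x y 1 + (1/2 : ℂ) * key x y (-1) - key x y 0
      - (1/2 : ℂ) * hQ x y 1 - (1/2 : ℂ) * hQ x y (-1) + hQ x y 0
  have hBf : ∀ x y : ℂ, B x y = -2*(x + y) + p*(x*y) + q*(x*y)*(x + y) + r*(x*y)^2 := by
    intro x y
    linear_combination (1/2 : ℂ) * key x y 1 - (1/2 : ℂ) * key x y (-1)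
      - (1/2 : ℂ) * hQ x y 1 + (1/2 : ℂ) * hQ x y (-1)
  -- the discriminant identity
  have H : ∀ x y : ℂ, 16 * f.eval x * f.eval y =
      (4*x - p*x^2 - 2*q*x^3 - r*x^4) * (4*y - p*y^2 - 2*q*y^3 - r*y^4)
        + (q^2 - p*r - 4*s) * (x*y*(x - y))^2 := by
    intro x y
    have hd := hdisc x y
    rw [hAf x y, hBf x y, hCf x y] at hd
    linear_combination -hd
  -- the split hypothesis forces q² - pr - 4s = 0
  have hprod : ∀ x y : ℂ,
      (4*x - p*x^2 - 2*q*x^3 - r*x^4) * (4*y - p*y^2 - 2*q*y^3 - r*y^4)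
        = 16 * f.eval x * f.eval y := by
    set g : Polynomial ℂ :=
      Polynomial.C 4 * Polynomial.X - Polynomial.C p * Polynomial.X^2
        - Polynomial.C (2*q) * Polynomial.X^3 - Polynomial.C r * Polynomial.X^4 with hg
    have hgev : ∀ x : ℂ, g.eval x = 4*x - p*x^2 - 2*q*x^3 - r*x^4 := by
      intro x; simp [hg]
    have hzero : (Polynomial.C 4 * f - g) * (Polynomial.C 4 * f + g) = 0 := by
      apply Polynomial.funext
      intro x
      simp only [Polynomial.eval_mul, Polynomial.eval_add, Polynomial.eval_sub,
        Polynomial.eval_C, Polynomial.eval_zero]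
      rw [hgev x]
      linear_combination H x x
    rcases mul_eq_zero.mp hzero with h | h
    · have h' : ∀ x : ℂ, 4 * f.eval x - (4*x - p*x^2 - 2*q*x^3 - r*x^4) = 0 := by
        intro x
        have := congrArg (Polynomial.eval x) h
        simpa [Polynomial.eval_mul, Polynomial.eval_sub, hgev x] using this
      intro x y
      linear_combination (-(4 * f.eval y)) * h' x
        - (4*x - p*x^2 - 2*q*x^3 - r*x^4) * h' y
    · have h' : ∀ x : ℂ, 4 * f.eval x + (4*x - p*x^2 - 2*q*x^3 - r*x^4) = 0 := by
        intro x
        have := congrArg (Polynomial.eval x) h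
        simpa [Polynomial.eval_mul, Polynomial.eval_add, hgev x] using this
      intro x y
      linear_combination (-(4 * f.eval y)) * h' x
        + (4*x - p*x^2 - 2*q*x^3 - r*x^4) * h' y
  have hrel : q^2 - p*r - 4*s = 0 := by
    linear_combination (-(1/4) : ℂ) * H 1 2 + (-(1/4) : ℂ) * hprod 1 2
  -- conclude
  refine ⟨-p/4, -q/2, -r/4, fun x y z => ?_⟩
  linear_combination key x y z - hF x y z - (x^2*y^2*z^2/4) * hrel
end

section
/- Let a, b, c, x, y, z ∈ ℂ, set σ₁ = x+y+z, σ₂ = xy+yz+zx, σ₃ = xyz, f(t) = t³ + at² + bt + c, and q(t) = (a+σ₁)t² + (b−σ₂)t + (c+σ₃). Then (1) a point (t,u) ∈ ℂ² lies on both curves u² = f(t) and u² = (t−x)(t−y)(t−z) if and only if u² = f(t) and q(t) = 0; (2) assume additionally that a + σ₁ ≠ 0 and that f and q have no common root; then the set of common points of the two curves in ℂ² has exactly two elements if and only if the discriminant (b−σ₂)² − 4(a+σ₁)(c+σ₃) of q vanishes, i.e. if and only if D_{a,b,c}(x,y,z) = 0. -/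
lemma aux_sqrt (w : ℂ) (hw : w ≠ 0) : ∃ s : ℂ, s^2 = w ∧ s ≠ 0 := by
  obtain ⟨s, hs⟩ := Complex.isAlgClosed.exists_pow_nat_eq w two_pos
  exact ⟨s, hs, fun h => hw (by rw [← hs, h]; ring)⟩

lemma aux_sq_eq (u s : ℂ) (h : u^2 = s^2) : u = s ∨ u = -s := by
  have : (u - s) * (u + s) = 0 := by linear_combination h
  rcases mul_eq_zero.mp this with h' | h'
  · left; linear_combination h'
  · right; linear_combination h'

lemma aux_neg_ne (s : ℂ) (hs : s ≠ 0) : s ≠ -s := by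
  intro h; apply hs; linear_combination h/2

lemma aux_quad_zero (A B C : ℂ) (hA : A ≠ 0) (hd : B^2 - 4*A*C = 0) (t : ℂ) :
    A*t^2 + B*t + C = 0 ↔ t = -B/(2*A) := by
  constructor
  · intro h
    have h2 : (2*A*t + B)^2 = 0 := by linear_combination 4*A*h + hd
    have h3 : 2*A*t + B = 0 := pow_eq_zero_iff (n := 2) (by norm_num) |>.mp h2
    field_simp
    linear_combination h3
  · intro h
    subst h
    field_simp
    linear_combination (-1 : ℂ) * hd

lemma aux_quad_two (A B C d : ℂ) (hA : A ≠ 0) (hd : d^2 = B^2 - 4*A*C) (t : ℂ) :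
    A*t^2 + B*t + C = 0 ↔ t = (-B + d)/(2*A) ∨ t = (-B - d)/(2*A) := by
  constructor
  · intro h
    have h2 : (2*A*t + B - d) * (2*A*t + B + d) = 0 := by linear_combination 4*A*h - hd
    rcases mul_eq_zero.mp h2 with h' | h'
    · left; field_simp; linear_combination h'
    · right; field_simp; linear_combination h'
  · rintro (h | h) <;> subst h <;> field_simp <;> ring_nf <;>
      linear_combination hd

/-- Intersection of the two elliptic curves
`u² = t³ + at² + bt + c` and `u² = (t−x)(t−y)(t−z)`: the common points are
governed by the quadratic `q(t) = (a+σ₁)t² + (b−σ₂)t + (c+σ₃)`, and (under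
genericity assumptions) the intersection has exactly two points iff the
Kontsevich polynomial vanishes. -/
theorem curve_intersection_kontsevich (a b c x y z : ℂ) :
    (∀ t u : ℂ,
      (u^2 = t^3 + a*t^2 + b*t + c ∧ u^2 = (t - x)*(t - y)*(t - z)) ↔
      (u^2 = t^3 + a*t^2 + b*t + c ∧
        (a + (x + y + z))*t^2 + (b - (x*y + y*z + z*x))*t + (c + x*y*z) = 0)) ∧
    ((a + (x + y + z) ≠ 0) →
      (∀ t : ℂ, ¬(t^3 + a*t^2 + b*t + c = 0 ∧
        (a + (x + y + z))*t^2 + (b - (x*y + y*z + z*x))*t + (c + x*y*z) = 0)) →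
      ({p : ℂ × ℂ | p.2^2 = p.1^3 + a*p.1^2 + b*p.1 + c ∧
          p.2^2 = (p.1 - x)*(p.1 - y)*(p.1 - z)}.ncard = 2 ↔
        (b - (x*y + y*z + z*x))^2 - 4*(a + (x + y + z))*(c + x*y*z) = 0)) := by
  constructor
  · intro t u
    constructor
    · rintro ⟨h1, h2⟩; exact ⟨h1, by linear_combination h2 - h1⟩
    · rintro ⟨h1, h2⟩; exact ⟨h1, by linear_combination h1 + h2⟩
  · intro hA hroot
    set A := a + (x + y + z) with hAdef
    set B := b - (x*y + y*z + z*x) with hBdef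
    set C := c + x*y*z with hCdef
    have hSeq : {p : ℂ × ℂ | p.2^2 = p.1^3 + a*p.1^2 + b*p.1 + c ∧
        p.2^2 = (p.1 - x)*(p.1 - y)*(p.1 - z)} =
        {p : ℂ × ℂ | p.2^2 = p.1^3 + a*p.1^2 + b*p.1 + c ∧
          A*p.1^2 + B*p.1 + C = 0} := by
      ext ⟨t, u⟩
      simp only [Set.mem_setOf_eq]
      constructor
      · rintro ⟨h1, h2⟩
        refine ⟨h1, ?_⟩
        rw [hAdef, hBdef, hCdef]
        linear_combination h2 - h1
      · rintro ⟨h1, h2⟩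
        refine ⟨h1, ?_⟩
        rw [hAdef, hBdef, hCdef] at h2
        linear_combination h1 + h2
    rw [hSeq]
    constructor
    · -- ncard = 2 → disc = 0
      intro hcard
      by_contra hdisc
      obtain ⟨d, hd2, hd0⟩ := aux_sqrt (B^2 - 4*A*C) (by
        intro h; exact hdisc h)
      set t₁ := (-B + d)/(2*A) with ht1
      set t₂ := (-B - d)/(2*A) with ht2
      have ht12 : t₁ ≠ t₂ := by
        intro h
        rw [ht1, ht2, div_left_inj' (mul_ne_zero two_ne_zero hA)] at h
        exact hd0 (by linear_combination h/2)
      have hq1 : A*t₁^2 + B*t₁ + C = 0 :=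
        (aux_quad_two A B C d hA hd2 t₁).mpr (Or.inl rfl)
      have hq2 : A*t₂^2 + B*t₂ + C = 0 :=
        (aux_quad_two A B C d hA hd2 t₂).mpr (Or.inr rfl)
      have hf1 : t₁^3 + a*t₁^2 + b*t₁ + c ≠ 0 := fun h => hroot t₁ ⟨h, hq1⟩
      have hf2 : t₂^3 + a*t₂^2 + b*t₂ + c ≠ 0 := fun h => hroot t₂ ⟨h, hq2⟩
      obtain ⟨s₁, hs1, hs10⟩ := aux_sqrt _ hf1
      obtain ⟨s₂, hs2, hs20⟩ := aux_sqrt _ hf2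
      have hset4 : {p : ℂ × ℂ | p.2^2 = p.1^3 + a*p.1^2 + b*p.1 + c ∧
          A*p.1^2 + B*p.1 + C = 0} =
          {(t₁, s₁), (t₁, -s₁), (t₂, s₂), (t₂, -s₂)} := by
        ext ⟨t, u⟩
        simp only [Set.mem_setOf_eq, Set.mem_insert_iff, Set.mem_singleton_iff,
          Prod.mk.injEq]
        constructor
        · rintro ⟨h1, h2⟩
          rcases (aux_quad_two A B C d hA hd2 t).mp h2 with h | h
          · subst h
            rcases aux_sq_eq u s₁ (h1.trans hs1.symm) with h | h
            · exact Or.inl ⟨rfl, h⟩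
            · exact Or.inr (Or.inl ⟨rfl, h⟩)
          · subst h
            rcases aux_sq_eq u s₂ (h1.trans hs2.symm) with h | h
            · exact Or.inr (Or.inr (Or.inl ⟨rfl, h⟩))
            · exact Or.inr (Or.inr (Or.inr ⟨rfl, h⟩))
        · rintro (⟨rfl, rfl⟩ | ⟨rfl, rfl⟩ | ⟨rfl, rfl⟩ | ⟨rfl, rfl⟩)
          · exact ⟨hs1, hq1⟩
          · exact ⟨by rw [neg_pow]; simpa using hs1, hq1⟩
          · exact ⟨hs2, hq2⟩
          · exact ⟨by rw [neg_pow]; simpa using hs2, hq2⟩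
      rw [hset4] at hcard
      have h4 : ({(t₁, s₁), (t₁, -s₁), (t₂, s₂), (t₂, -s₂)} : Set (ℂ × ℂ)).ncard = 4 := by
        rw [Set.ncard_insert_of_notMem (by
            simp only [Set.mem_insert_iff, Set.mem_singleton_iff, Prod.mk.injEq, not_or]
            exact ⟨fun h => aux_neg_ne s₁ hs10 h.2, fun h => ht12 h.1, fun h => ht12 h.1⟩),
          Set.ncard_insert_of_notMem (by
            simp only [Set.mem_insert_iff, Set.mem_singleton_iff, Prod.mk.injEq, not_or]
            exact ⟨fun h => ht12 h.1, fun h => ht12 h.1⟩),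
          Set.ncard_pair (by
            intro h
            exact aux_neg_ne s₂ hs20 (congrArg Prod.snd h))]
      rw [h4] at hcard
      norm_num at hcard
    · -- disc = 0 → ncard = 2
      intro hdisc
      set t₀ := -B/(2*A) with ht0
      have hq0 : A*t₀^2 + B*t₀ + C = 0 := (aux_quad_zero A B C hA hdisc t₀).mpr rfl
      have hf0 : t₀^3 + a*t₀^2 + b*t₀ + c ≠ 0 := fun h => hroot t₀ ⟨h, hq0⟩
      obtain ⟨s, hs, hs0⟩ := aux_sqrt _ hf0
      have hset2 : {p : ℂ × ℂ | p.2^2 = p.1^3 + a*p.1^2 + b*p.1 + c ∧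
          A*p.1^2 + B*p.1 + C = 0} = {(t₀, s), (t₀, -s)} := by
        ext ⟨t, u⟩
        simp only [Set.mem_setOf_eq, Set.mem_insert_iff, Set.mem_singleton_iff,
          Prod.mk.injEq]
        constructor
        · rintro ⟨h1, h2⟩
          have ht := (aux_quad_zero A B C hA hdisc t).mp h2
          subst ht
          rcases aux_sq_eq u s (h1.trans hs.symm) with h | h
          · exact Or.inl ⟨rfl, h⟩
          · exact Or.inr ⟨rfl, h⟩
        · rintro (⟨rfl, rfl⟩ | ⟨rfl, rfl⟩)
          · exact ⟨hs, hq0⟩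
          · exact ⟨by rw [neg_pow]; simpa using hs, hq0⟩
      rw [hset2]
      exact Set.ncard_pair (fun h =>
        aux_neg_ne s hs0 (congrArg Prod.snd h))
end

section
/- Let a, b, c, x ∈ ℂ. If x³ + ax² + bx + c = 0 and x⁴ − 2bx² − 8cx + b² − 4ac = 0, then Δ(a,b,c) = a²b² − 4b³ − 4a³c + 18abc − 27c² = 0. (Equivalently: if the cubic discriminant Δ(a,b,c) is nonzero, the coefficients A_{a,b,c}(x,x) = 0, B_{a,b,c}(x,x) = −2(x³+ax²+bx+c) and C_{a,b,c}(x,x) = x⁴−2bx²−8cx+b²−4ac of the Kontsevich quadratic cannot vanish simultaneously.) -/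
/-- If `x³ + ax² + bx + c = 0` and
`x⁴ − 2bx² − 8cx + b² − 4ac = 0`, then the cubic discriminant
`a²b² − 4b³ − 4a³c + 18abc − 27c²` vanishes. -/
theorem common_root_implies_discriminant_zero (a b c x : ℂ)
    (h1 : x^3 + a*x^2 + b*x + c = 0)
    (h2 : x^4 - 2*b*x^2 - 8*c*x + b^2 - 4*a*c = 0) :
    a^2*b^2 - 4*b^3 - 4*a^3*c + 18*a*b*c - 27*c^2 = 0 := by
  have hg : (a^2 - 3*b)*x^2 + (a*b - 9*c)*x + (b^2 - 3*a*c) = 0 := by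
    linear_combination h2 - (x - a) * h1
  have hsq : (a^2*b^2 - 4*b^3 - 4*a^3*c + 18*a*b*c - 27*c^2)^2 = 0 := by
    linear_combination
      ((729*c^3 + 108*b^3*c - 648*a*b*c^2 - 24*a*b^4 + 81*a^2*b^2*c + 135*a^3*c^2
          + 10*a^3*b^3 - 42*a^4*b*c - a^5*b^2 + 4*a^6*c)
        + (243*b*c^2 + 36*b^4 - 162*a*b^2*c - 81*a^2*c^2 - 21*a^2*b^3 + 90*a^3*b*c
          + 3*a^4*b^2 - 12*a^5*c)*x) * h1
      + ((108*b*c^2 + 16*b^4 - 72*a*b^2*c - 27*a^2*c^2 - 8*a^2*b^3 + 34*a^3*b*c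
          + a^4*b^2 - 4*a^5*c)
        + (54*a*c^2 + 8*a*b^3 - 36*a^2*b*c - 2*a^3*b^2 + 8*a^4*c)*x
        + (81*c^2 + 12*b^3 - 54*a*b*c - 3*a^2*b^2 + 12*a^3*c)*x^2) * hg
  exact pow_eq_zero_iff (two_ne_zero) |>.mp hsq
end

section
/- For all a, b, c ∈ ℂ and all nonzero x, y, z ∈ ℂ: (xyz)² · D_{a,b,c}(1/x, 1/y, 1/z) = B_{a,b,c}(x,y,z), where D_{a,b,c} is the generalized Kontsevich polynomial and B_{a,b,c} is the Buchstaber polynomial with parameters a₁ = a, a₂ = b, a₃ = c. -/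
/-- Buchstaber–Kontsevich correspondence:
`(xyz)²·D_{a,b,c}(1/x, 1/y, 1/z) = B_{a,b,c}(x,y,z)` for nonzero `x,y,z`. -/
theorem buchstaber_kontsevich_correspondence (a b c x y z : ℂ)
    (hx : x ≠ 0) (hy : y ≠ 0) (hz : z ≠ 0) :
    (x*y*z)^2 *
      ((1/x - 1/y)^2*(1/z)^2
        - 2*(2*a*(1/x)*(1/y) + (1/x + 1/y)*((1/x)*(1/y) + b) + 2*c)*(1/z)
        + ((1/x)*(1/y) - b)^2 - 4*c*(1/x + 1/y + a)) =
    (x + y + z - b*x*y*z)^2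
      - 4*(1 + c*x*y*z)*(x*y + y*z + z*x + a*x*y*z) := by
  have hX : x * (1/x) = 1 := mul_one_div_cancel hx
  have hY : y * (1/y) = 1 := mul_one_div_cancel hy
  have hZ : z * (1/z) = 1 := mul_one_div_cancel hz
  linear_combination ((-4*x*y^2*z^2*c) + (-2*(1/z)*x*y^2*z^2*b) + ((1/z)^2*y^2*z^2) + (-2*(1/y)*x*y^2*z^2*b) + (-2*(1/y)*(1/z)*y^2*z^2) + (-4*(1/y)*(1/z)*x*y^2*z^2*a) + (-2*(1/y)*(1/z)^2*x*y^2*z^2) + ((1/y)^2*y^2*z^2) + (-2*(1/y)^2*(1/z)*x*y^2*z^2) + ((1/x)*(1/z)^2*x*y^2*z^2) + (-2*(1/x)*(1/y)*(1/z)*x*y^2*z^2) + ((1/x)*(1/y)^2*x*y^2*z^2)) * hX + ((z^2) + (-2*x*y*z^2*b) + (-4*x^2*y*z^2*c) + (-2*(1/z)*y*z^2) + (-2*(1/z)*x*z^2) + (-4*(1/z)*x*y*z^2*a) + (-2*(1/z)*x^2*y*z^2*b) + (-2*(1/z)^2*x*y*z^2) + ((1/z)^2*x^2*z^2) + ((1/y)*y*z^2)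 + (-2*(1/y)*(1/z)*x*y*z^2) + ((1/y)*(1/z)^2*x^2*y*z^2)) * hY + ((-2*y*z) + (y^2) + (-2*x*z) + (-2*x*y) + (-4*x*y*z*a) + (-2*x*y^2*z*b) + (x^2) + (-2*x^2*y*z*b) + (-4*x^2*y^2*z*c) + ((1/z)*y^2*z) + (-2*(1/z)*x*y*z) + ((1/z)*x^2*z)) * hZ
end

section
/- For all a, b, c, x, y, z ∈ ℂ, writing σ₁ = x+y+z, σ₂ = xy+yz+zx, σ₃ = xyz, the polynomial in t given by xyz·(t³ + at² + bt + c) − (xt−1)(yt−1)(zt−1) equals the quadratic (a·σ₃ + σ₂)t² + (b·σ₃ − σ₁)t + (c·σ₃ + 1), and its discriminant equals the Buchstaber polynomial: (b·σ₃ − σ₁)² − 4(a·σ₃ + σ₂)(c·σ₃ + 1) = B_{a,b,c}(x,y,z). Thus the Buchstaber polynomial is itself a discriminant-type polynomial. -/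
/-- `xyz·(t³ + at² + bt + c) − (xt−1)(yt−1)(zt−1)` is the
quadratic `(aσ₃+σ₂)t² + (bσ₃−σ₁)t + (cσ₃+1)` and its discriminant is the
Buchstaber polynomial `B_{a,b,c}(x,y,z)`. -/
theorem buchstaber_is_discriminant (a b c x y z : ℂ) :
    (∀ t : ℂ,
      x*y*z*(t^3 + a*t^2 + b*t + c) - (x*t - 1)*(y*t - 1)*(z*t - 1) =
        (a*(x*y*z) + (x*y + y*z + z*x))*t^2
          + (b*(x*y*z) - (x + y + z))*t + (c*(x*y*z) + 1)) ∧
    (b*(x*y*z) - (x + y + z))^2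
      - 4*(a*(x*y*z) + (x*y + y*z + z*x))*(c*(x*y*z) + 1) =
    (x + y + z - b*x*y*z)^2
      - 4*(1 + c*x*y*z)*(x*y + y*z + z*x + a*x*y*z) := by
  constructor
  · intro t; ring
  · ring
end

section
/- Let x, y, z ∈ ℂ be nonzero and pairwise distinct, and define j(x,y,z) = 256·((x+y+z)² − 3(xy+yz+zx))³ / ((x−y)²(y−z)²(z−x)²) (the j-invariant of the elliptic curve u² = (t−x)(t−y)(t−z)). Then j(x,y,z) = j(−1/x, −1/y, −1/z) if and only if (xz − y²)(xy − z²)(x² − yz)(x²y + z²x + y²z − 3xyz)(x²z + y²x + yz² − 3xyz) = 0. -/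
set_option maxHeartbeats 4000000 in
/-- For pairwise distinct nonzero `x,y,z`, the `j`-invariant of
`u² = (t−x)(t−y)(t−z)` is invariant under the Buchstaber–Kontsevich involution
`(x,y,z) ↦ (−1/x,−1/y,−1/z)` iff a certain quintic locus vanishes. -/
theorem j_invariant_fixed_locus (x y z : ℂ)
    (hx : x ≠ 0) (hy : y ≠ 0) (hz : z ≠ 0)
    (hxy : x ≠ y) (hyz : y ≠ z) (hzx : z ≠ x) :
    (256*((x + y + z)^2 - 3*(x*y + y*z + z*x))^3 /
        ((x - y)^2*(y - z)^2*(z - x)^2) =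
      256*(((-1/x) + (-1/y) + (-1/z))^2
          - 3*((-1/x)*(-1/y) + (-1/y)*(-1/z) + (-1/z)*(-1/x)))^3 /
        (((-1/x) - (-1/y))^2*((-1/y) - (-1/z))^2*((-1/z) - (-1/x))^2)) ↔
    (x*z - y^2)*(x*y - z^2)*(x^2 - y*z)
      *(x^2*y + z^2*x + y^2*z - 3*x*y*z)
      *(x^2*z + y^2*x + y*z^2 - 3*x*y*z) = 0 := by
  have h1 : x - y ≠ 0 := sub_ne_zero.mpr hxy
  have h2 : y - z ≠ 0 := sub_ne_zero.mpr hyz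
  have h3 : z - x ≠ 0 := sub_ne_zero.mpr hzx
  have hw : x*y*z ≠ 0 := mul_ne_zero (mul_ne_zero hx hy) hz
  have hB : (x - y)^2*(y - z)^2*(z - x)^2 ≠ 0 :=
    mul_ne_zero (mul_ne_zero (pow_ne_zero 2 h1) (pow_ne_zero 2 h2)) (pow_ne_zero 2 h3)
  have hxyz : (x*y*z)^2 ≠ 0 := pow_ne_zero 2 hw
  have hB2 : (x*y*z)^2 * ((x - y)^2*(y - z)^2*(z - x)^2) ≠ 0 := mul_ne_zero hxyz hB
  have hin : ((-1/x) + (-1/y) + (-1/z))^2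
      - 3*((-1/x)*(-1/y) + (-1/y)*(-1/z) + (-1/z)*(-1/x))
      = ((x*y + y*z + z*x)^2 - 3*(x*y*z)*(x + y + z)) / (x*y*z)^2 := by
    have hs : (-1/x) + (-1/y) + (-1/z) = -(x*y + y*z + z*x)/(x*y*z) := by
      field_simp; ring
    have hp : (-1/x)*(-1/y) + (-1/y)*(-1/z) + (-1/z)*(-1/x) = (x + y + z)/(x*y*z) := by
      field_simp; ring
    rw [hs, hp]
    field_simp
  have hden : (((-1/x) - (-1/y))^2*((-1/y) - (-1/z))^2*((-1/z) - (-1/x))^2)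
      = ((x - y)^2*(y - z)^2*(z - x)^2) / (x*y*z)^4 := by
    have e1 : (-1/x) - (-1/y) = (x - y)/(x*y) := by field_simp; ring
    have e2 : (-1/y) - (-1/z) = (y - z)/(y*z) := by field_simp; ring
    have e3 : (-1/z) - (-1/x) = (z - x)/(z*x) := by field_simp; ring
    rw [e1, e2, e3]
    field_simp
  have hR : 256*(((-1/x) + (-1/y) + (-1/z))^2
          - 3*((-1/x)*(-1/y) + (-1/y)*(-1/z) + (-1/z)*(-1/x)))^3 /
        (((-1/x) - (-1/y))^2*((-1/y) - (-1/z))^2*((-1/z) - (-1/x))^2)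
      = 256*((x*y + y*z + z*x)^2 - 3*(x*y*z)*(x + y + z))^3 /
        ((x*y*z)^2 * ((x - y)^2*(y - z)^2*(z - x)^2)) := by
    rw [hin, hden, div_pow, ← pow_mul, mul_div_assoc', div_div_div_comm, div_div]
    congr 1
    rw [show (2*3 : ℕ) = 4 + 2 from rfl, pow_add,
      mul_div_cancel_left₀ _ (pow_ne_zero 4 hw), mul_comm]
  rw [hR, div_eq_div_iff hB hB2, ← sub_eq_zero]
  have h256B : (256:ℂ) * ((x - y)^2*(y - z)^2*(z - x)^2) ≠ 0 :=
    mul_ne_zero (by norm_num) hB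
  constructor
  · intro h
    have key : (256 * ((x - y)^2*(y - z)^2*(z - x)^2)) *
        ((x*z - y^2)*(x*y - z^2)*(x^2 - y*z)
          *(x^2*y + z^2*x + y^2*z - 3*x*y*z)
          *(x^2*z + y^2*x + y*z^2 - 3*x*y*z)) = 0 := by linear_combination h
    exact (mul_eq_zero.mp key).resolve_left h256B
  · intro h
    linear_combination (256 * ((x - y)^2*(y - z)^2*(z - x)^2)) * h
end
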